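/- arXiv:2003.03450 — 4 statements merged into one kernel-verified Lean document; each statement's English description precedes it below -/
import Mathlib

section
/- Let F be a field and γ ∈ GL_n(F) regular elliptic (irreducible characteristic polynomial). Let P₀ = {g ∈ GL_n(F) : last row of g equals (0,…,0,1)} be the stabilizer of the row vector e_n. Then every g ∈ GL_n(F) can be written uniquely as g = p·x with p ∈ P₀ and x ∈ F[γ]^× (an invertible element of the field F[γ]); in particular GL_n(F) = P₀ · F[γ]^× and P₀ ∩ F[γ]^× = {I_n}. -/
set_option synthInstance.maxHeartbeats 1000000
set_option maxHeartbeats 1000000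

section Aux

variable {F : Type*} [Field F] {n : ℕ}

/-- Every nonzero element of `F[γ]` has a two-sided inverse in `F[γ]`. -/
lemma aux_inv (γ : Matrix (Fin n) (Fin n) F) [Nonempty (Fin n)]
    (hirr : Irreducible (Matrix.charpoly γ))
    {x : Matrix (Fin n) (Fin n) F} (hx : x ∈ Algebra.adjoin F {γ}) (hx0 : x ≠ 0) :
    ∃ y ∈ Algebra.adjoin F {γ}, x * y = 1 ∧ y * x = 1 := by
  have hint : IsIntegral F γ := ⟨_, γ.charpoly_monic, γ.aeval_self_charpoly⟩
  have hmin : minpoly F γ = Matrix.charpoly γ := by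
    have hdvd : minpoly F γ ∣ Matrix.charpoly γ := minpoly.dvd F γ γ.aeval_self_charpoly
    obtain ⟨c, hc⟩ := hdvd
    rcases hirr.isUnit_or_isUnit hc with h | h
    · exact absurd h (minpoly.not_isUnit F γ)
    · refine Polynomial.eq_of_monic_of_associated (minpoly.monic hint) γ.charpoly_monic ⟨h.unit, ?_⟩
      rw [hc]; rfl
  have hmirr : Irreducible (minpoly F γ) := hmin ▸ hirr
  rw [Algebra.adjoin_singleton_eq_range_aeval] at hx
  obtain ⟨q, hq⟩ := hx
  have hq' : Polynomial.aeval γ q = x := hq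
  have hndvd : ¬ minpoly F γ ∣ q := by
    intro ⟨c, hc⟩
    apply hx0
    rw [← hq', hc, map_mul, minpoly.aeval, zero_mul]
  obtain ⟨a, b, hab⟩ := (hmirr.coprime_iff_not_dvd.mpr hndvd)
  have key : Polynomial.aeval γ b * x = 1 := by
    have := congrArg (Polynomial.aeval γ) hab
    simp only [map_add, map_mul, minpoly.aeval, mul_zero, map_one, zero_add, hq'] at this
    exact this
  have hcom : x * Polynomial.aeval γ b = Polynomial.aeval γ b * x := by
    rw [← hq', ← map_mul, ← map_mul, mul_comm]
  exact ⟨Polynomial.aeval γ b, Algebra.adjoin_singleton_eq_range_aeval F γ ▸ ⟨b, rfl⟩,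
    hcom.trans key, key⟩

end Aux

/-- For regular elliptic `γ ∈ GL_n(F)` every `g ∈ GL_n(F)` factors uniquely as `g = p·x`
with `p` in the mirabolic subgroup `P₀` (invertible matrices whose last row is `(0,…,0,1)`)
and `x` a nonzero element of the field `F[γ]`; moreover `P₀ ∩ F[γ]ˣ = {1}`. -/
theorem stmt2 {F : Type*} [Field F] (n : ℕ) (hn : 1 ≤ n)
    (γ : Matrix (Fin n) (Fin n) F) (hγ : IsUnit γ)
    (hirr : Irreducible (Matrix.charpoly γ)) :
    (∀ g : Matrix (Fin n) (Fin n) F, IsUnit g →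
      ∃! px : Matrix (Fin n) (Fin n) F × Matrix (Fin n) (Fin n) F,
        IsUnit px.1 ∧
        (∀ j : Fin n, px.1 ⟨n - 1, by omega⟩ j = if j = (⟨n - 1, by omega⟩ : Fin n) then 1 else 0) ∧
        px.2 ∈ Algebra.adjoin F {γ} ∧ px.2 ≠ 0 ∧ g = px.1 * px.2) ∧
    (∀ p : Matrix (Fin n) (Fin n) F, IsUnit p →
      (∀ j : Fin n, p ⟨n - 1, by omega⟩ j = if j = (⟨n - 1, by omega⟩ : Fin n) then 1 else 0) →
      p ∈ Algebra.adjoin F {γ} → p = 1) := by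
  haveI : Nonempty (Fin n) := ⟨⟨n - 1, by omega⟩⟩
  set i₀ : Fin n := ⟨n - 1, by omega⟩ with hi₀
  have hint : IsIntegral F γ := ⟨_, γ.charpoly_monic, γ.aeval_self_charpoly⟩
  have hmin : minpoly F γ = Matrix.charpoly γ := by
    have hdvd : minpoly F γ ∣ Matrix.charpoly γ := minpoly.dvd F γ γ.aeval_self_charpoly
    obtain ⟨c, hc⟩ := hdvd
    rcases hirr.isUnit_or_isUnit hc with h | h
    · exact absurd h (minpoly.not_isUnit F γ)
    · refine Polynomial.eq_of_monic_of_associated (minpoly.monic hint) γ.charpoly_monic ⟨h.unit, ?_⟩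
      rw [hc]; rfl
  -- injectivity: an element of the adjoin whose last row vanishes is zero
  have hinj : ∀ x ∈ Algebra.adjoin F {γ}, (∀ j, x i₀ j = 0) → x = 0 := by
    intro x hx hrow
    by_contra hx0
    obtain ⟨y, _, hxy, _⟩ := aux_inv γ hirr hx hx0
    have h1 : (x * y) i₀ i₀ = (1 : Matrix (Fin n) (Fin n) F) i₀ i₀ := by rw [hxy]
    simp [Matrix.mul_apply, hrow, Matrix.one_apply] at h1
  -- the "last row" linear map from polynomials of degree < n
  let Row : Matrix (Fin n) (Fin n) F →ₗ[F] (Fin n → F) :=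
    { toFun := fun A => fun j => A i₀ j
      map_add' := fun A B => by ext j; simp
      map_smul' := fun c A => by ext j; simp }
  let M : ↥(Polynomial.degreeLT F n) →ₗ[F] (Fin n → F) :=
    Row ∘ₗ (Polynomial.aeval γ).toLinearMap ∘ₗ (Submodule.subtype _)
  have hdegmin : (minpoly F γ).degree = (n : ℕ) := by
    rw [Polynomial.degree_eq_natDegree (minpoly.ne_zero hint), hmin]
    norm_cast
    simp [Matrix.charpoly_natDegree_eq_dim]
  have hMinj : Function.Injective M := by
    rw [← LinearMap.ker_eq_bot, LinearMap.ker_eq_bot']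
    intro ⟨q, hq⟩ hMq
    have hrow0 : ∀ j, (Polynomial.aeval γ q) i₀ j = 0 := fun j => congrFun hMq j
    have h0 : Polynomial.aeval γ q = 0 :=
      hinj _ (Polynomial.aeval_mem_adjoin_singleton F γ) hrow0
    have hdvd : minpoly F γ ∣ q := minpoly.dvd F γ h0
    have : q = 0 := Polynomial.eq_zero_of_dvd_of_degree_lt hdvd
      (by rw [hdegmin]; exact Polynomial.mem_degreeLT.mp hq)
    exact Subtype.ext this
  have hfr : Module.finrank F (Polynomial.degreeLT F n) = Module.finrank F (Fin n → F) :=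
    (Polynomial.degreeLTEquiv F n).finrank_eq
  haveI : FiniteDimensional F (Polynomial.degreeLT F n) :=
    LinearEquiv.finiteDimensional (Polynomial.degreeLTEquiv F n).symm
  have hMsurj : Function.Surjective M :=
    (LinearMap.injective_iff_surjective_of_finrank_eq_finrank hfr).mp hMinj
  constructor
  · intro g hg
    -- the last row of g is achieved by a unique x in the adjoin
    obtain ⟨⟨q, hqlt⟩, hqrow⟩ := hMsurj (fun j => g i₀ j)
    set x : Matrix (Fin n) (Fin n) F := Polynomial.aeval γ q with hxdef
    have hxA : x ∈ Algebra.adjoin F {γ} := Polynomial.aeval_mem_adjoin_singleton F γ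
    have hxrow' : ∀ j, x i₀ j = g i₀ j := fun j => congrFun hqrow j
    have hgrow : ∃ j, g i₀ j ≠ 0 := by
      by_contra hall
      push_neg at hall
      obtain ⟨u, rfl⟩ := hg
      have h1 : ((u : Matrix (Fin n) (Fin n) F) * (↑u⁻¹ : Matrix (Fin n) (Fin n) F)) i₀ i₀ =
          (1 : Matrix (Fin n) (Fin n) F) i₀ i₀ := by
        rw [← Units.val_mul, mul_inv_cancel, Units.val_one]
      simp [Matrix.mul_apply, hall, Matrix.one_apply] at h1
    have hx0 : x ≠ 0 := by
      intro h
      obtain ⟨j, hj⟩ := hgrow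
      exact hj (by rw [← hxrow' j, h]; simp)
    obtain ⟨y, hyA, hxy, hyx⟩ := aux_inv γ hirr hxA hx0
    refine ⟨(g * y, x), ⟨?_, ?_, hxA, hx0, ?_⟩, ?_⟩
    · -- IsUnit (g * y)
      exact hg.mul ⟨⟨y, x, hyx, hxy⟩, rfl⟩
    · -- last row of g * y is e_n
      intro j
      show (g * y) i₀ j = if j = i₀ then 1 else 0
      have : (g * y) i₀ j = (x * y) i₀ j := by
        simp only [Matrix.mul_apply]
        exact Finset.sum_congr rfl fun k _ => by rw [hxrow' k]
      rw [this, hxy, Matrix.one_apply, eq_comm]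
      simp only [eq_comm]
    · -- g = (g * y) * x
      rw [mul_assoc, hyx, mul_one]
    · -- uniqueness
      rintro ⟨p', x'⟩ ⟨hp'u, hp'row, hx'A, hx'0, hfac⟩
      have hrowx' : ∀ j, x' i₀ j = g i₀ j := by
        intro j
        rw [hfac, Matrix.mul_apply]
        rw [Finset.sum_eq_single i₀]
        · rw [hp'row i₀]; simp
        · intro k _ hk
          rw [hp'row k, if_neg hk, zero_mul]
        · intro h; exact absurd (Finset.mem_univ i₀) h
      have hxx' : x' = x := by
        have hsub : x' - x ∈ Algebra.adjoin F {γ} := Subalgebra.sub_mem _ hx'A hxA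
        have : x' - x = 0 := hinj _ hsub (fun j => by
          simp [Matrix.sub_apply, hrowx' j, hxrow' j])
        exact sub_eq_zero.mp this
      have hpp' : p' = g * y := by
        have : p' * x * y = g * y := by rw [← hxx', ← hfac]
        rwa [mul_assoc, hxy, mul_one] at this
      rw [Prod.ext_iff]
      exact ⟨hpp', hxx'⟩
  · -- second part
    intro p hpu hprow hpA
    have : p - 1 ∈ Algebra.adjoin F {γ} := Subalgebra.sub_mem _ hpA (Subalgebra.one_mem _)
    have hz : p - 1 = 0 := by
      apply hinj _ this
      intro j
      simp [Matrix.sub_apply, hprow j, Matrix.one_apply, eq_comm]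
    exact sub_eq_zero.mp hz
end

section
/- Let b(u) = (1/2)·{u} − (1/2)·{u}², where {u} = u − ⌊u⌋ is the fractional part. Then for every complex number s = β + iγ with β ≥ 0 and γ ≥ 1, the integral ∫₀^∞ b(u)/(u+s)² du converges absolutely and satisfies |∫₀^∞ b(u)/(u+s)² du| ≤ 1/(3γ). -/
open MeasureTheory Set Real

lemma aux_int_gamma {γ : ℝ} (hγ : 0 < γ) :
    IntegrableOn (fun u : ℝ => (u ^ 2 + γ ^ 2)⁻¹) (Ioi 0) ∧
    ∫ u in Ioi (0 : ℝ), (u ^ 2 + γ ^ 2)⁻¹ = π / (2 * γ) := by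
  have key : ∀ u : ℝ, (u ^ 2 + γ ^ 2)⁻¹ = γ⁻¹ * (γ⁻¹ * (1 + (γ⁻¹ * u) ^ 2)⁻¹) := by
    intro u
    field_simp
    ring
  constructor
  · have h1 : IntegrableOn (fun u : ℝ => (1 + (γ⁻¹ * u) ^ 2)⁻¹) (Ioi 0) := by
      have := (integrableOn_Ioi_comp_mul_left_iff (fun x : ℝ => (1 + x ^ 2)⁻¹) 0
        (inv_pos.mpr hγ)).mpr (by simpa using integrable_inv_one_add_sq.integrableOn)
      simpa using this
    have h2 := (h1.const_mul γ⁻¹).const_mul γ⁻¹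
    refine h2.congr ?_
    filter_upwards with u using (key u).symm
  · calc ∫ u in Ioi (0 : ℝ), (u ^ 2 + γ ^ 2)⁻¹
        = ∫ u in Ioi (0 : ℝ), γ⁻¹ * (γ⁻¹ * (1 + (γ⁻¹ * u) ^ 2)⁻¹) := by
          exact setIntegral_congr_fun measurableSet_Ioi (fun u _ => key u)
      _ = γ⁻¹ * (γ⁻¹ * ∫ u in Ioi (0 : ℝ), (1 + (γ⁻¹ * u) ^ 2)⁻¹) := by
          rw [integral_const_mul, integral_const_mul]
      _ = π / (2 * γ) := by
          have h3 := integral_comp_mul_left_Ioi (fun x : ℝ => (1 + x ^ 2)⁻¹) 0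
            (inv_pos.mpr hγ)
          simp only [mul_zero, integral_Ioi_inv_one_add_sq, arctan_zero, sub_zero,
            smul_eq_mul] at h3
          rw [h3, inv_inv]
          field_simp

/-- With `b(u) = (1/2){u} − (1/2){u}²` (`{u}` the fractional part), for `s = β + iγ` with
`β ≥ 0` and `γ ≥ 1` the integral `∫₀^∞ b(u)/(u+s)² du` converges absolutely and is bounded
in absolute value by `1/(3γ)`. -/
theorem stmt12 (s : ℂ) (hre : 0 ≤ s.re) (him : 1 ≤ s.im) :
    MeasureTheory.IntegrableOn
      (fun u : ℝ =>
        (((1 / 2) * Int.fract u - (1 / 2) * Int.fract u ^ 2 : ℝ) : ℂ) / ((u : ℂ) + s) ^ 2)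
      (Set.Ioi 0) ∧
    ‖(∫ u in Set.Ioi (0 : ℝ),
        (((1 / 2) * Int.fract u - (1 / 2) * Int.fract u ^ 2 : ℝ) : ℂ) / ((u : ℂ) + s) ^ 2)‖ ≤
      1 / (3 * s.im) := by
  set γ := s.im with hγdef
  have hγ : 0 < γ := lt_of_lt_of_le one_pos him
  set f : ℝ → ℂ := fun u =>
    (((1 / 2) * Int.fract u - (1 / 2) * Int.fract u ^ 2 : ℝ) : ℂ) / ((u : ℂ) + s) ^ 2 with hf
  obtain ⟨hint, hval⟩ := aux_int_gamma hγ
  -- pointwise bound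
  have hbound : ∀ u ∈ Ioi (0 : ℝ), ‖f u‖ ≤ (1 / 8) * (u ^ 2 + γ ^ 2)⁻¹ := by
    intro u hu
    have hu0 : (0 : ℝ) < u := hu
    have hx0 : (0 : ℝ) ≤ Int.fract u := Int.fract_nonneg u
    have hx1 : Int.fract u < 1 := Int.fract_lt_one u
    have hnum : |(1 / 2 : ℝ) * Int.fract u - (1 / 2) * Int.fract u ^ 2| ≤ 1 / 8 := by
      rw [abs_le]
      constructor <;> nlinarith [sq_nonneg (Int.fract u - 1 / 2)]
    have hden : (u ^ 2 + γ ^ 2) ≤ ‖((u : ℂ) + s) ^ 2‖ := by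
      rw [norm_pow, ← Complex.normSq_eq_norm_sq, Complex.normSq_apply]
      simp only [Complex.add_re, Complex.add_im, Complex.ofReal_re, Complex.ofReal_im, zero_add]
      nlinarith [sq_nonneg s.re, mul_nonneg hu0.le hre]
    have hdpos : (0 : ℝ) < u ^ 2 + γ ^ 2 := by positivity
    rw [hf]
    simp only [norm_div, Complex.norm_real, Real.norm_eq_abs]
    rw [div_le_iff₀ (lt_of_lt_of_le hdpos hden)]
    calc |(1 / 2 : ℝ) * Int.fract u - (1 / 2) * Int.fract u ^ 2| ≤ 1 / 8 := hnum
      _ = (1 / 8) * (u ^ 2 + γ ^ 2)⁻¹ * (u ^ 2 + γ ^ 2) := by field_simp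
      _ ≤ (1 / 8) * (u ^ 2 + γ ^ 2)⁻¹ * ‖((u : ℂ) + s) ^ 2‖ := by
          gcongr
  have hmeas : AEStronglyMeasurable f (volume.restrict (Ioi 0)) := by
    apply Measurable.aestronglyMeasurable
    apply Measurable.div
    · apply Complex.measurable_ofReal.comp
      exact (measurable_fract.const_mul _).sub ((measurable_fract.pow_const 2).const_mul _)
    · exact (Complex.measurable_ofReal.add_const s).pow_const 2
  have hg : IntegrableOn (fun u : ℝ => (1 / 8) * (u ^ 2 + γ ^ 2)⁻¹) (Ioi 0) :=
    hint.const_mul _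
  have hif : IntegrableOn f (Ioi 0) := by
    refine Integrable.mono hg hmeas ?_
    filter_upwards [ae_restrict_mem measurableSet_Ioi] with u hu
    refine (hbound u hu).trans (le_abs_self _)
  refine ⟨hif, ?_⟩
  have h1 : ‖∫ u in Ioi (0 : ℝ), f u‖ ≤
      ∫ u in Ioi (0 : ℝ), (1 / 8) * (u ^ 2 + γ ^ 2)⁻¹ := by
    refine (norm_integral_le_integral_norm f).trans ?_
    refine setIntegral_mono_on hif.norm hg measurableSet_Ioi hbound
  rw [integral_const_mul, hval] at h1
  refine h1.trans ?_
  have : (1:ℝ) / 8 * (π / (2 * γ)) = π / (16 * γ) := by ring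
  rw [this, div_le_div_iff₀ (by positivity) (by positivity)]
  nlinarith [pi_le_four, hγ]
end

section
/- Let d ≥ 1 and let (f_m)_{m∈ℕ} be a sequence of real-analytic functions on ℝ^d such that for every point x ∈ ℝ^d there exists M(x) ∈ ℕ with f_m(x) = 0 for all m ≥ M(x). Then there exists M₀ ∈ ℕ such that f_m is identically zero on ℝ^d for every m ≥ M₀. -/
/-- If each `f_m : ℝ^d → ℂ` is real-analytic and for every point `x` the values `f_m(x)`
vanish for all sufficiently large `m`, then there is `M₀` such that `f_m ≡ 0` for all
`m ≥ M₀`. -/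
theorem stmt13 (d : ℕ) (hd : 1 ≤ d) (f : ℕ → (Fin d → ℝ) → ℂ)
    (hf : ∀ m : ℕ, ∀ x : Fin d → ℝ, AnalyticAt ℝ (f m) x)
    (hz : ∀ x : Fin d → ℝ, ∃ M : ℕ, ∀ m ≥ M, f m x = 0) :
    ∃ M₀ : ℕ, ∀ m ≥ M₀, ∀ x : Fin d → ℝ, f m x = 0 := by
  set Λ : ℕ → Set (Fin d → ℝ) := fun l => {x | ∀ m, l ≤ m → f m x = 0} with hΛ
  have hclosed : ∀ l, IsClosed (Λ l) := by
    intro l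
    have h : Λ l = ⋂ m, ⋂ _ : l ≤ m, (f m) ⁻¹' {0} := by
      ext x; simp [hΛ]
    rw [h]
    exact isClosed_iInter fun m => isClosed_iInter fun _ =>
      (isClosed_singleton.preimage (continuous_iff_continuousAt.2 fun x => (hf m x).continuousAt))
  have hcover : (⋃ l, Λ l) = Set.univ := by
    ext x
    simp only [Set.mem_iUnion, Set.mem_univ, iff_true, hΛ, Set.mem_setOf_eq]
    obtain ⟨M, hM⟩ := hz x
    exact ⟨M, fun m hm => hM m hm⟩
  obtain ⟨l₀, hl₀⟩ := nonempty_interior_of_iUnion_of_closed hclosed hcover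
  obtain ⟨x₀, hx₀⟩ := hl₀
  refine ⟨l₀, fun m hm x => ?_⟩
  have hev : f m =ᶠ[nhds x₀] 0 := by
    filter_upwards [isOpen_interior.mem_nhds hx₀] with y hy
    exact interior_subset hy m hm
  have han : AnalyticOnNhd ℝ (f m) Set.univ := fun y _ => hf m y
  have := han.eqOn_zero_of_preconnected_of_eventuallyEq_zero
    isPreconnected_univ (Set.mem_univ x₀) hev
  exact this (Set.mem_univ x)
end

section
/- Let F be a field, d ≥ 2, and let C ∈ M_d(F) be the companion matrix of the monic polynomial ℘(λ) = λ^d − c_{d−1}λ^{d−1} − ⋯ − c_1λ − c_0 (so C has subdiagonal entries 1, last column (c_0,…,c_{d−1})ᵀ, and zeros elsewhere). Let N ∈ M_d(F) be the matrix with a single nonzero entry 1 in position (1,d). For 1 ≤ i ≤ d−1, write (b^{(i)}_1, …, b^{(i)}_d) for the last row of C^i, and let X_{(i)} ∈ M_d(F) be the strictly upper triangular Toeplitz matrix with (k,l)-entry b^{(i)}_{l−k} for l > k (and 0 for l ≤ k). Then X = X_{(i)} satisfies the Sylvester equation C·X − X·C = C^i·N − N·C^i. -/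
open Finset

section aux
variable {F : Type*} [Field F] {m : ℕ}

lemma aux_mulC (c : Fin (m+2) → F) (C : Matrix (Fin (m+2)) (Fin (m+2)) F)
    (hC : ∀ k l : Fin (m + 2),
      C k l = if (k : ℕ) = (l : ℕ) + 1 then 1 else if (l : ℕ) = m + 1 then c k else 0)
    (M : Matrix (Fin (m+2)) (Fin (m+2)) F) (k l : Fin (m+2)) :
    (M * C) k l = if h : (l:ℕ) < m+1 then M k ⟨(l:ℕ)+1, by omega⟩ else ∑ j, M k j * c j := by
  rw [Matrix.mul_apply]
  split_ifs with h
  · have hc : ∀ j : Fin (m+2), C j l = if j = (⟨(l:ℕ)+1, by omega⟩ : Fin (m+2)) then 1 else 0 := by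
      intro j
      rw [hC]
      simp only [Fin.ext_iff]
      split_ifs <;> simp_all <;> omega
    simp_rw [hc, mul_ite, mul_one, mul_zero]
    rw [Finset.sum_ite_eq' univ _ (fun j => M k j), if_pos (mem_univ _)]
  · have hl : (l:ℕ) = m+1 := by have := l.isLt; omega
    have hc : ∀ j : Fin (m+2), C j l = c j := by
      intro j
      rw [hC, if_neg (by have := j.isLt; omega), if_pos hl]
    simp_rw [hc]

lemma aux_Cmul (c : Fin (m+2) → F) (C : Matrix (Fin (m+2)) (Fin (m+2)) F)
    (hC : ∀ k l : Fin (m + 2),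
      C k l = if (k : ℕ) = (l : ℕ) + 1 then 1 else if (l : ℕ) = m + 1 then c k else 0)
    (M : Matrix (Fin (m+2)) (Fin (m+2)) F) (k l : Fin (m+2)) :
    (C * M) k l = (if h : 1 ≤ (k:ℕ) then M ⟨(k:ℕ)-1, by have := k.isLt; omega⟩ l else 0)
      + c k * M (Fin.last (m+1)) l := by
  rw [Matrix.mul_apply]
  have hc : ∀ j : Fin (m+2), C k j * M j l =
      (if h : 1 ≤ (k:ℕ) then (if j = (⟨(k:ℕ)-1, by have := k.isLt; omega⟩ : Fin (m+2)) then M j l else 0) else 0)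
      + (if j = Fin.last (m+1) then c k * M j l else 0) := by
    intro j
    rw [hC]
    have hk := k.isLt
    have hj := j.isLt
    by_cases h1 : (k:ℕ) = (j:ℕ) + 1
    · rw [if_pos h1, dif_pos (by omega), if_pos (by simp [Fin.ext_iff]; omega),
        if_neg (by simp [Fin.ext_iff]; omega), one_mul, add_zero]
    · rw [if_neg h1]
      by_cases h2 : (j:ℕ) = m+1
      · rw [if_pos h2, if_pos (by simp [Fin.ext_iff]; omega)]
        split_ifs with h3 h4
        · simp [Fin.ext_iff] at h4; omega
        · rw [zero_add]
        · rw [zero_add]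
      · rw [if_neg h2, if_neg (by simp [Fin.ext_iff]; omega), add_zero, zero_mul]
        split_ifs with h3 h4
        · simp [Fin.ext_iff] at h4; omega
        · rfl
        · rfl
  rw [Finset.sum_congr rfl (fun j _ => hc j), Finset.sum_add_distrib]
  congr 1
  · split_ifs with h
    · rw [Finset.sum_ite_eq' univ _ (fun j => M j l), if_pos (mem_univ _)]
    · simp
  · rw [Finset.sum_ite_eq' univ _ (fun j => c k * M j l), if_pos (mem_univ _)]


variable (c : Fin (m+2) → F) (C : Matrix (Fin (m+2)) (Fin (m+2)) F)
    (hC : ∀ k l : Fin (m + 2),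
      C k l = if (k : ℕ) = (l : ℕ) + 1 then 1 else if (l : ℕ) = m + 1 then c k else 0)

include hC


lemma aux_colshift : ∀ p, (hp : p ≤ m+1) → ∀ (n : ℕ) (k : Fin (m+2)),
    (C^(n+p)) k 0 = (C^n) k ⟨p, by omega⟩ := by
  intro p
  induction p with
  | zero =>
    intro _ n k
    simp only [Nat.add_zero, Fin.mk_zero]
  | succ p ih =>
    intro hp n k
    rw [show n + (p+1) = (n+1) + p from by omega, ih (by omega), pow_succ,
      aux_mulC c C hC, dif_pos (show ((⟨p, by omega⟩ : Fin (m+2)):ℕ) < m+1 from by simpa using by omega)]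

lemma aux_aval : ∀ p, (hp : p ≤ m+1) →
    (C^p) (Fin.last (m+1)) 0 = if p = m+1 then 1 else 0 := by
  intro p hp
  have h := aux_colshift c C hC p hp 0 (Fin.last (m+1))
  rw [Nat.zero_add] at h
  rw [h, pow_zero, Matrix.one_apply]
  split_ifs with h1 h2 h3
  · rfl
  · simp [Fin.ext_iff] at h1; omega
  · simp [Fin.ext_iff] at h1 ⊢; omega
  · rfl

lemma aux_col0 : ∀ p, (hp : p ≤ m+1) → ∀ k : Fin (m+2),
    (C^p) k 0 = if (k:ℕ) = p then 1 else 0 := by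
  intro p hp k
  have h := aux_colshift c C hC p hp 0 k
  rw [Nat.zero_add] at h
  rw [h, pow_zero, Matrix.one_apply]
  split_ifs with h1 h2 h3
  · rfl
  · simp [Fin.ext_iff] at h1; omega
  · simp [Fin.ext_iff] at h1 ⊢; omega
  · rfl

lemma aux_rec : ∀ n : ℕ, (C^(n+(m+2))) (Fin.last (m+1)) 0
    = ∑ t : Fin (m+2), c t * (C^(n+(t:ℕ))) (Fin.last (m+1)) 0 := by
  suffices H : ∀ j, (hj : j ≤ m+1) → ∀ n, (C^(n+j+1)) (⟨j, by omega⟩ : Fin (m+2)) 0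
      = ∑ t : Fin (m+2), if (t:ℕ) ≤ j then c t * (C^(n+(t:ℕ))) (Fin.last (m+1)) 0 else 0 by
    intro n
    have h := H (m+1) le_rfl n
    rw [show n+(m+1)+1 = n+(m+2) from by omega] at h
    rw [show (⟨m+1, by omega⟩ : Fin (m+2)) = Fin.last (m+1) from rfl] at h
    rw [h]
    refine Finset.sum_congr rfl fun t _ => ?_
    rw [if_pos (by have := t.isLt; omega)]
  intro j
  induction j with
  | zero =>
    intro _ n
    simp only [Nat.add_zero]
    rw [pow_succ', aux_Cmul c C hC, dif_neg (by simp)]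
    have : ∀ t : Fin (m+2), (if (t:ℕ) ≤ 0 then c t * (C^(n+(t:ℕ))) (Fin.last (m+1)) 0 else 0)
        = if t = (⟨0, by omega⟩ : Fin (m+2)) then c t * (C^(n+(t:ℕ))) (Fin.last (m+1)) 0 else 0 := by
      intro t
      congr 1
      rw [Fin.ext_iff, Nat.le_zero]
    rw [Finset.sum_congr rfl (fun t _ => this t),
      Finset.sum_ite_eq' univ _ (fun t => c t * (C^(n+(t:ℕ))) (Fin.last (m+1)) 0), if_pos (mem_univ _)]
    simp
  | succ j ih =>
    intro hj n
    rw [show n+(j+1)+1 = (n+j+1)+1 from by omega, pow_succ', aux_Cmul c C hC,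
      dif_pos (show 1 ≤ ((⟨j+1, by omega⟩ : Fin (m+2)):ℕ) from by simp)]
    have e1 : (C^(n+j+1)) (⟨((⟨j+1, by omega⟩ : Fin (m+2)):ℕ)-1, by omega⟩ : Fin (m+2)) 0
        = ∑ t : Fin (m+2), if (t:ℕ) ≤ j then c t * (C^(n+(t:ℕ))) (Fin.last (m+1)) 0 else 0 :=
      ih (by omega) n
    rw [e1]
    have split : ∀ t : Fin (m+2), (if (t:ℕ) ≤ j+1 then c t * (C^(n+(t:ℕ))) (Fin.last (m+1)) 0 else 0)
        = (if (t:ℕ) ≤ j then c t * (C^(n+(t:ℕ))) (Fin.last (m+1)) 0 else 0)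
          + (if t = (⟨j+1, by omega⟩ : Fin (m+2)) then c t * (C^(n+(t:ℕ))) (Fin.last (m+1)) 0 else 0) := by
    -- pointwise
      intro t
      by_cases h1 : (t:ℕ) ≤ j
      · rw [if_pos (by omega), if_pos h1, if_neg (by simp [Fin.ext_iff]; omega), add_zero]
      · by_cases h2 : (t:ℕ) = j+1
        · rw [if_pos (by omega), if_neg h1, if_pos (by simp [Fin.ext_iff]; omega), zero_add]
        · rw [if_neg (by omega), if_neg h1, if_neg (by simp [Fin.ext_iff]; omega), add_zero]
    rw [Finset.sum_congr rfl (fun t _ => split t), Finset.sum_add_distrib,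
      Finset.sum_ite_eq' univ _ (fun t => c t * (C^(n+(t:ℕ))) (Fin.last (m+1)) 0), if_pos (mem_univ _)]
    congr 1


end aux


/-- Let `C ∈ M_d(F)` (`d = m + 2 ≥ 2`) be the companion-type matrix with subdiagonal
entries `1`, last column `(c_0,…,c_{d−1})ᵀ` and zeros elsewhere, let `N` have a single
entry `1` in position `(1,d)`, let `(b^{(i)}_1,…,b^{(i)}_d)` be the last row of `C^i`, and
let `X_{(i)}` be the strictly upper triangular Toeplitz matrix with `(k,l)`-entry
`b^{(i)}_{l−k}` for `l > k`. Then for `1 ≤ i ≤ d−1`, `X = X_{(i)}` satisfies the Sylvester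
equation `C·X − X·C = C^i·N − N·C^i`. -/
theorem stmt18 {F : Type*} [Field F] (m i : ℕ) (hi : 1 ≤ i) (hid : i ≤ m + 1)
    (c : Fin (m + 2) → F)
    (C N X : Matrix (Fin (m + 2)) (Fin (m + 2)) F)
    (hC : ∀ k l : Fin (m + 2),
      C k l = if (k : ℕ) = (l : ℕ) + 1 then 1 else if (l : ℕ) = m + 1 then c k else 0)
    (hN : N = Matrix.single 0 (Fin.last (m + 1)) 1)
    (hX : ∀ k l : Fin (m + 2),
      X k l = if hkl : (k : ℕ) < (l : ℕ) then
          (C ^ i) (Fin.last (m + 1)) ⟨(l : ℕ) - (k : ℕ) - 1, by have := l.isLt; omega⟩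
        else 0) :
    C * X - X * C = C ^ i * N - N * C ^ i := by
  have hXe : ∀ k l : Fin (m+2), X k l =
      if (k:ℕ) < (l:ℕ) then (C^(i+((l:ℕ)-(k:ℕ)-1))) (Fin.last (m+1)) 0 else 0 := by
    intro k l
    rw [hX]
    split_ifs with h
    · exact (aux_colshift c C hC ((l:ℕ)-(k:ℕ)-1) (by have := l.isLt; omega) i (Fin.last (m+1))).symm
    · rfl
  have hXlast : ∀ l, X (Fin.last (m+1)) l = 0 := by
    intro l
    rw [hXe, if_neg (by have := l.isLt; simp; omega)]
  ext k l
  rw [Matrix.sub_apply, Matrix.sub_apply, aux_Cmul c C hC X k l, aux_mulC c C hC X k l,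
    hXlast, mul_zero, add_zero, hN]
  by_cases hl : (l:ℕ) < m+1
  · rw [dif_pos hl]
    have hl' : l ≠ Fin.last (m+1) := by simp [Fin.ext_iff]; omega
    rw [Matrix.mul_single_apply_of_ne _ _ _ _ _ hl']
    by_cases hk : 1 ≤ (k:ℕ)
    · rw [dif_pos hk]
      have hk0 : k ≠ (0 : Fin (m+2)) := by rw [Ne, Fin.ext_iff, Fin.val_zero]; omega
      rw [Matrix.single_mul_apply_of_ne _ _ _ _ _ hk0]
      rw [hXe, hXe]
      by_cases hkl : (k:ℕ) ≤ (l:ℕ)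
      · rw [if_pos (by simp only [Fin.val_mk]; omega), if_pos (by simp only [Fin.val_mk]; omega)]
        simp only [Fin.val_mk]
        rw [show (l:ℕ) - ((k:ℕ)-1) - 1 = (l:ℕ)+1-(k:ℕ)-1 from by omega]
        simp
      · rw [if_neg (by simp only [Fin.val_mk]; omega), if_neg (by simp only [Fin.val_mk]; omega)]
    · rw [dif_neg hk]
      have hk0 : k = 0 := Fin.ext (by rw [Fin.val_zero]; omega)
      subst hk0
      rw [Matrix.single_mul_apply_same, one_mul, hXe]
      rw [if_pos (by simp only [Fin.val_mk, Fin.val_zero]; omega)]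
      have h2 : (C^i) (Fin.last (m+1)) l = (C^(i+(l:ℕ))) (Fin.last (m+1)) 0 :=
        (aux_colshift c C hC (l:ℕ) (by omega) i (Fin.last (m+1))).symm
      rw [h2]
      simp only [Fin.val_mk, Fin.val_zero, Nat.sub_zero, Nat.add_sub_cancel]
  · rw [dif_neg hl]
    have hl' : l = Fin.last (m+1) := Fin.ext (by have := l.isLt; simp; omega)
    subst hl'
    rw [Matrix.mul_single_apply_same, mul_one, aux_col0 c C hC i hid k]
    have hS : ∑ j, X k j * c j = ∑ j : Fin (m+2),
        (if (k:ℕ) < (j:ℕ) then c j * (C^(i+((j:ℕ)-(k:ℕ)-1))) (Fin.last (m+1)) 0 else 0) := by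
      refine Finset.sum_congr rfl fun j _ => ?_
      rw [hXe]
      split_ifs
      · ring
      · rw [zero_mul]
    rw [hS]
    have key : ∀ k' : ℕ, k' ≤ m+1 →
        (C^(i+(m+1-k'))) (Fin.last (m+1)) 0
          - (∑ j : Fin (m+2), if k' < (j:ℕ) then c j * (C^(i+((j:ℕ)-k'-1))) (Fin.last (m+1)) 0 else 0)
        = (if k' = i then 1 else 0) := by
      intro k' hk'
      by_cases hki : i ≤ k'
      · rw [aux_aval c C hC (i+(m+1-k')) (by omega)]
        have hz : ∀ j : Fin (m+2),
            (if k' < (j:ℕ) then c j * (C^(i+((j:ℕ)-k'-1))) (Fin.last (m+1)) 0 else 0) = 0 := by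
          intro j
          split_ifs with h
          · rw [aux_aval c C hC (i+((j:ℕ)-k'-1)) (by have := j.isLt; omega),
              if_neg (by have := j.isLt; omega), mul_zero]
          · rfl
        rw [Finset.sum_congr rfl (fun j _ => hz j), Finset.sum_const_zero, sub_zero]
        exact if_congr (by omega) rfl rfl
      · push_neg at hki
        rw [show i+(m+1-k') = (i-k'-1)+(m+2) from by omega, aux_rec c C hC (i-k'-1),
          if_neg (by omega), sub_eq_zero]
        refine Finset.sum_congr rfl fun t _ => ?_
        by_cases h : k' < (t:ℕ)
        · rw [if_pos h, show (i-k'-1)+(t:ℕ) = i+((t:ℕ)-k'-1) from by omega]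
        · rw [if_neg h, aux_aval c C hC ((i-k'-1)+(t:ℕ)) (by have := t.isLt; omega),
            if_neg (by omega), mul_zero]
    by_cases hk : 1 ≤ (k:ℕ)
    · rw [dif_pos hk, hXe,
        if_pos (by simp only [Fin.val_mk, Fin.val_last]; have := k.isLt; omega)]
      have hk0 : k ≠ (0 : Fin (m+2)) := by rw [Ne, Fin.ext_iff, Fin.val_zero]; omega
      rw [Matrix.single_mul_apply_of_ne _ _ _ _ _ hk0, sub_zero]
      simp only [Fin.val_mk, Fin.val_last]
      rw [show (m+1) - ((k:ℕ)-1) - 1 = m+1-(k:ℕ) from by omega]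
      exact key (k:ℕ) (by have := k.isLt; omega)
    · rw [dif_neg hk]
      have hk0 : k = 0 := Fin.ext (by rw [Fin.val_zero]; omega)
      subst hk0
      rw [Matrix.single_mul_apply_same, one_mul]
      have h2 : (C^i) (Fin.last (m+1)) (Fin.last (m+1)) = (C^(i+(m+1))) (Fin.last (m+1)) 0 :=
        (aux_colshift c C hC (m+1) le_rfl i (Fin.last (m+1))).symm
      rw [h2, if_neg (by simp; omega)]
      have hkey := key 0 (by omega)
      rw [if_neg (by omega), Nat.sub_zero, sub_eq_zero] at hkey
      simp only [Fin.val_zero, Nat.sub_zero] at hkey ⊢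
      rw [hkey]
      rfl
end
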